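/- Let D = (C_1,…,C_r) be a lexicographic northwest diagram that is closed under intersections (for every nonempty S ⊆ {1,…,r}, the set ⋂_{j∈S} C_j equals some column of D). Then the last column C_r covers at most one column of D, and at most one column of D covers C_r. That is: (i) if C and C' are columns of D each covered by C_r, then C = C'; (ii) if C and C' are columns of D each covering C_r, then C = C'. -/

import Mathlib

/-- A diagram, given as a list of columns `C : Fin r → Finset ℕ`, is *northwest* if
for all `j ≤ j'`, `i ∈ C j` and `i' ∈ C j'` imply `min i i' ∈ C j`. -/
def IsNorthwest {r : ℕ} (C : Fin r → Finset ℕ) : Prop :=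
  ∀ j j' : Fin r, j ≤ j' → ∀ i ∈ C j, ∀ i' ∈ C j', min i i' ∈ C j

/-- `A` is an *initial subset* of `B` : `A ⊊ B` and every element of `B \ A` is greater
than every element of `A`. -/
def InitSub (A B : Finset ℕ) : Prop :=
  A ⊂ B ∧ ∀ x ∈ B \ A, ∀ y ∈ A, y < x

/-- Lexicographic comparison of finite subsets of `ℕ`, comparing the increasing lists of
elements: `A <lex B` iff the sorted list of `A` is smaller than that of `B` in the
(strict) lexicographic order on lists (in particular a proper initial segment is
smaller). -/
def LexLT (A B : Finset ℕ) : Prop :=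
  List.Lex (· < ·) (A.sort (· ≤ ·)) (B.sort (· ≤ ·))

/-- A list of columns is *lexicographic* if it is strictly increasing in `LexLT`
(in particular the columns are pairwise distinct). -/
def IsLex {r : ℕ} (C : Fin r → Finset ℕ) : Prop :=
  ∀ a b : Fin r, a < b → LexLT (C a) (C b)

/-- `B` *covers* `A` among the columns of `C` : `A ⊊ B` with no column strictly
between. -/
def CoversIn {r : ℕ} (C : Fin r → Finset ℕ) (A B : Finset ℕ) : Prop :=
  A ⊂ B ∧ ∀ k : Fin r, ¬(A ⊂ C k ∧ C k ⊂ B)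

lemma lex_asymm : ∀ {l1 l2 : List ℕ}, List.Lex (· < ·) l1 l2 → ¬ List.Lex (· < ·) l2 l1 := by
  intro l1 l2 h
  induction h with
  | nil => intro h'; cases h'
  | rel hab => intro h'; cases h' with
    | rel h => omega
    | cons h => omega
  | cons h ih => intro h'; cases h' with
    | rel h => omega
    | cons h => exact ih h

lemma lex_of_init : ∀ (l1 l2 : List ℕ), l1.Pairwise (· < ·) → l2.Pairwise (· < ·) →
    (∀ y ∈ l1, y ∈ l2) → (∃ x ∈ l2, x ∉ l1) →
    (∀ x ∈ l2, x ∉ l1 → ∀ y ∈ l1, y < x) → List.Lex (· < ·) l1 l2 := by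
  intro l1
  induction l1 with
  | nil =>
    rintro l2 _ _ _ ⟨x, hx, -⟩ _
    cases l2 with
    | nil => cases hx
    | cons b t => exact List.Lex.nil
  | cons a t1 ih =>
    intro l2 h1 h2 hsub hex hbig
    obtain ⟨hat1, h1'⟩ := List.pairwise_cons.mp h1
    have ha2 : a ∈ l2 := hsub a (by simp)
    cases l2 with
    | nil => cases ha2
    | cons b t2 =>
      obtain ⟨hbt2, h2'⟩ := List.pairwise_cons.mp h2
      by_cases hba : b = a
      · subst hba
        apply List.Lex.cons
        apply ih t2 h1' h2'
        · intro y hy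
          have hy2 := hsub y (by simp [hy])
          have : y ≠ b := fun hc => absurd (hc ▸ hat1 y hy) (lt_irrefl y ∘ (hc ▸ ·))
          rcases List.mem_cons.mp hy2 with h | h
          · exact absurd h this
          · exact h
        · obtain ⟨x, hx, hxn⟩ := hex
          have hxb : x ≠ b := fun hc => hxn (by simp [hc])
          refine ⟨x, ?_, fun hc => hxn (by simp [hc])⟩
          rcases List.mem_cons.mp hx with h | h
          · exact absurd h hxb
          · exact h
        · intro x hx hxn y hy
          have hbx : b < x := hbt2 x hx
          exact hbig x (by simp [hx]) (by simp [hxn]; omega) y (by simp [hy])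
      · have hab : a < b → False := by
          intro h
          rcases List.mem_cons.mp ha2 with h' | h'
          · exact hba h'.symm
          · have := hbt2 a h'; omega
        have hbnotl1 : b ∉ a :: t1 := by
          intro hc
          rcases List.mem_cons.mp hc with h | h
          · exact hba h
          · exact hab (hat1 b h)
        exact absurd (hbig b (by simp) hbnotl1 a (by simp)) (fun h => hab h)

lemma lex_rev : ∀ (l1 l2 : List ℕ), l1.Pairwise (· < ·) → l2.Pairwise (· < ·) →
    (∀ y ∈ l1, y ∈ l2) → ∀ x, x ∈ l2 → x ∉ l1 →
    (∀ z ∈ l2, z ∉ l1 → x ≤ z) → (∃ y ∈ l1, x < y) → List.Lex (· < ·) l2 l1 := by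
  intro l1
  induction l1 with
  | nil => rintro l2 _ _ _ x _ _ _ ⟨y, hy, -⟩; cases hy
  | cons a t1 ih =>
    intro l2 h1 h2 hsub x hx2 hx1 hmin hy
    obtain ⟨hat1, h1'⟩ := List.pairwise_cons.mp h1
    have ha2 : a ∈ l2 := hsub a (by simp)
    cases l2 with
    | nil => cases ha2
    | cons b t2 =>
      obtain ⟨hbt2, h2'⟩ := List.pairwise_cons.mp h2
      by_cases hba : b = a
      · subst hba
        apply List.Lex.cons
        have hxb : x ≠ b := fun hc => hx1 (by simp [hc])
        have hxt2 : x ∈ t2 := by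
          rcases List.mem_cons.mp hx2 with h | h
          · exact absurd h hxb
          · exact h
        have hbx : b < x := hbt2 x hxt2
        apply ih t2 h1' h2' ?_ x hxt2 (fun hc => hx1 (by simp [hc])) ?_ ?_
        · intro y hy'
          have hy2 := hsub y (by simp [hy'])
          have : y ≠ b := fun hc => absurd (hc ▸ hat1 y hy') (by omega)
          rcases List.mem_cons.mp hy2 with h | h
          · exact absurd h this
          · exact h
        · intro z hz hzn
          exact hmin z (by simp [hz]) (by simp [hzn]; have := hbt2 z hz; omega)
        · obtain ⟨y, hy', hxy⟩ := hy
          rcases List.mem_cons.mp hy' with h | h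
          · omega
          · exact ⟨y, h, hxy⟩
      · have hbnotl1 : b ∉ a :: t1 := by
          intro hc
          rcases List.mem_cons.mp hc with h | h
          · exact hba h
          · have h1 : a < b := hat1 b h
            have h2 : b < a := by
              rcases List.mem_cons.mp ha2 with h' | h'
              · exact absurd h'.symm hba
              · exact hbt2 a h'
            omega
        have hba' : b < a := by
          rcases List.mem_cons.mp ha2 with h' | h'
          · exact absurd h'.symm hba
          · exact hbt2 a h'
        exact List.Lex.rel hba'

lemma lexLT_of_init {A B : Finset ℕ} (hsub : A ⊆ B) (hne : A ≠ B)
    (h : ∀ x ∈ B, x ∉ A → ∀ y ∈ A, y < x) : LexLT A B := by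
  obtain ⟨x, hxB, hxA⟩ := Finset.exists_of_ssubset (hsub.ssubset_of_ne hne)
  apply lex_of_init _ _ (A.sortedLT_sort.pairwise) (B.sortedLT_sort.pairwise)
  · intro y hy; rw [Finset.mem_sort] at *; exact hsub hy
  · exact ⟨x, by simpa [Finset.mem_sort] using hxB, by simpa [Finset.mem_sort] using hxA⟩
  · intro x hx hxn y hy
    rw [Finset.mem_sort] at hx hy
    exact h x hx (by simpa [Finset.mem_sort] using hxn) y hy

lemma lexLT_rev {A B : Finset ℕ} (hsub : A ⊆ B) {x : ℕ} (hxB : x ∈ B) (hxA : x ∉ A)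
    (hmin : ∀ z ∈ B, z ∉ A → x ≤ z) (hy : ∃ y ∈ A, x < y) : LexLT B A := by
  apply lex_rev _ _ (A.sortedLT_sort.pairwise) (B.sortedLT_sort.pairwise) ?_ x
    (by simpa [Finset.mem_sort] using hxB) (by simpa [Finset.mem_sort] using hxA) ?_ ?_
  · intro y hy; rw [Finset.mem_sort] at *; exact hsub hy
  · intro z hz hzn
    rw [Finset.mem_sort] at hz
    exact hmin z hz (by simpa [Finset.mem_sort] using hzn)
  · obtain ⟨y, hy', hxy⟩ := hy
    exact ⟨y, by simpa [Finset.mem_sort] using hy', hxy⟩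

lemma init_of_lexLT {A B : Finset ℕ} (hsub : A ⊆ B) (hne : A ≠ B) (hlex : LexLT A B) :
    ∀ x ∈ B, x ∉ A → ∀ y ∈ A, y < x := by
  have hne' : (B \ A).Nonempty := by
    obtain ⟨x, hxB, hxA⟩ := Finset.exists_of_ssubset (hsub.ssubset_of_ne hne)
    exact ⟨x, Finset.mem_sdiff.mpr ⟨hxB, hxA⟩⟩
  set x0 := (B \ A).min' hne' with hx0
  have hx0mem := (B \ A).min'_mem hne'
  rw [Finset.mem_sdiff] at hx0mem
  have hkey : ∀ y ∈ A, y < x0 := by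
    by_contra hc
    push_neg at hc
    obtain ⟨y, hyA, hyx⟩ := hc
    have hyx' : x0 < y := lt_of_le_of_ne hyx
      (fun hc' => hx0mem.2 (by rw [← hx0] at *; rw [hc']; exact hyA))
    have : LexLT B A := lexLT_rev hsub hx0mem.1 hx0mem.2
      (fun z hz hzn => (B \ A).min'_le z (Finset.mem_sdiff.mpr ⟨hz, hzn⟩)) ⟨y, hyA, hyx'⟩
    exact lex_asymm hlex this
  intro x hx hxn y hy
  have := (B \ A).min'_le x (Finset.mem_sdiff.mpr ⟨hx, hxn⟩)
  have := hkey y hy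
  omega

/-- Lemma `maxmin` (b): in a lexicographic northwest diagram that is closed under
intersections, the last column covers at most one column and is covered by at most one
column. -/
theorem last_column_covers_unique (r : ℕ) (hr : 1 ≤ r)
    (C : Fin r → Finset ℕ) (hNW : IsNorthwest C) (hlex : IsLex C)
    (hclosed : ∀ (S : Finset (Fin r)) (hS : S.Nonempty), ∃ j, S.inf' hS C = C j) :
    (∀ a b : Fin r,
      CoversIn C (C a) (C ⟨r - 1, by omega⟩) → CoversIn C (C b) (C ⟨r - 1, by omega⟩) →
      C a = C b) ∧
    (∀ a b : Fin r,
      CoversIn C (C ⟨r - 1, by omega⟩) (C a) → CoversIn C (C ⟨r - 1, by omega⟩) (C b) →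
      C a = C b) := by
  set lastIdx : Fin r := ⟨r - 1, by omega⟩ with hlastIdx
  set L : Finset ℕ := C lastIdx with hL
  have hlt : ∀ a : Fin r, C a ≠ L → LexLT (C a) L := by
    intro a hne
    have hlt' : a < lastIdx := by
      rcases lt_or_eq_of_le (Nat.le_sub_one_of_lt a.isLt : a.val ≤ r - 1) with h | h
      · exact h
      · exact absurd (congrArg C (Fin.ext h : a = lastIdx)) hne
    exact hlex a lastIdx hlt'
  constructor
  · -- at most one column covered by L
    intro a b ha hb
    by_contra hneq
    have key : ∀ c : Fin r, CoversIn C (C c) L → ∀ x ∈ L, x ∉ C c → ∀ y ∈ C c, y < x :=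
      fun c hc => init_of_lexLT hc.1.subset hc.1.ne (hlt c hc.1.ne)
    have hAB : C a ⊆ C b ∨ C b ⊆ C a := by
      by_cases h : ∀ u ∈ C a, u ∈ C b
      · exact Or.inl h
      · push_neg at h
        obtain ⟨u, huA, huB⟩ := h
        refine Or.inr fun v hvB => ?_
        by_contra hvA
        have h1 := key b hb u (ha.1.subset huA) huB v hvB
        have h2 := key a ha v (hb.1.subset hvB) hvA u huA
        omega
    rcases hAB with h | h
    · exact ha.2 b ⟨h.ssubset_of_ne hneq, hb.1⟩
    · exact hb.2 a ⟨h.ssubset_of_ne (Ne.symm hneq), ha.1⟩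
  · -- at most one column covering L
    intro a b ha hb
    by_contra hneq
    have hane : a ≠ b := fun h => hneq (congrArg C h)
    -- the intersection is a column, and by the covering hypothesis it equals L
    obtain ⟨k, hk⟩ := hclosed {a, b} ⟨a, by simp⟩
    have hkinter : C k = C a ∩ C b := by
      rw [← hk]
      rw [Finset.inf'_insert ⟨b, by simp⟩ C, Finset.inf'_singleton]
      rfl
    have hInter : C a ∩ C b = L := by
      have hLk : L ⊆ C k := by
        rw [hkinter]
        exact Finset.subset_inter ha.1.subset hb.1.subset
      by_contra hne
      rw [← hkinter] at hne
      have hkA : C k ⊆ C a := hkinter ▸ Finset.inter_subset_left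
      have h1 : C k ≠ C a := by
        intro h
        have hsub : C a ⊆ C b := by
          rw [← h, hkinter]; exact Finset.inter_subset_right
        exact hb.2 a ⟨ha.1, hsub.ssubset_of_ne hneq⟩
      exact ha.2 k ⟨hLk.ssubset_of_ne (Ne.symm hne), hkA.ssubset_of_ne h1⟩
    have hcontra : ∀ p q : Fin r, p < q → L ⊂ C p → L ⊂ C q → C p ∩ C q = L → False := by
      intro p q hpq hLp hLq hpqL
      obtain ⟨w, hw⟩ := Finset.exists_of_ssubset hLq
      have hne' : (C q \ L).Nonempty := ⟨w, Finset.mem_sdiff.mpr ⟨hw.1, hw.2⟩⟩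
      set x := (C q \ L).min' hne' with hx
      have hxmem := (C q \ L).min'_mem hne'
      rw [Finset.mem_sdiff] at hxmem
      have hxP : x ∉ C p := by
        intro h
        have hmem : x ∈ C p ∩ C q := Finset.mem_inter.mpr ⟨h, hxmem.1⟩
        rw [hpqL] at hmem
        exact hxmem.2 hmem
      have hall : ∀ i ∈ C p, i < x := by
        intro i hi
        have hmem := hNW p q (le_of_lt hpq) i hi x hxmem.1
        by_contra h
        push_neg at h
        rw [min_eq_right h] at hmem
        exact hxP hmem
      have h1 : LexLT L (C q) := by
        apply lexLT_of_init hLq.subset hLq.ne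
        intro z hz hzn y hy
        have hyx : y < x := hall y (hLp.subset hy)
        have hxz : x ≤ z := (C q \ L).min'_le z (Finset.mem_sdiff.mpr ⟨hz, hzn⟩)
        omega
      exact lex_asymm h1 (hlt q hLq.ne')
    rcases lt_or_gt_of_ne hane with h | h
    · exact hcontra a b h ha.1 hb.1 hInter
    · exact hcontra b a h hb.1 ha.1 (by rw [Finset.inter_comm]; exact hInter)
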